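/- Let K : ℝ → ℝ be odd, bounded, nonnegative and nonincreasing on (0,+∞), continuously differentiable on ℝ\{0}, and convex on (0,+∞), and set J := lim_{x→0⁻} 2K(x) (so that |J| = 2·lim_{x→0⁺} K(x)). Let u : ℝ → ℝ be continuous and integrable with 0 ≤ u(y) ≤ 1 for all y ∈ ℝ and M := ∫_ℝ u(y)dy > 0. Then the convolution K*u is differentiable on ℝ, with (K*u)′(x) = |J|·u(x) + ∫_0^{+∞} (u(x−y) + u(x+y))·K′(y)dy for every x ∈ ℝ, and consequently (K*u)′(x) ≥ |J|·u(x) − |J| + 2K(M/2) for every x ∈ ℝ. -/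

import Mathlib

open MeasureTheory Filter Set Real

noncomputable section

set_option maxHeartbeats 1000000 in
/-- the derivative formula for `K*u` and the key lower bound in
Section 3.4: for `K` odd, bounded, nonnegative and nonincreasing on `(0,∞)`,
`C¹` off the origin and convex on `(0,∞)`, with jump `J = lim_{x→0⁻} 2K(x)`, and
for `u` continuous, integrable, `0 ≤ u ≤ 1` with `M = ∫ u > 0`, the convolution
`K*u` is differentiable with
`(K*u)'(x) = |J| u(x) + ∫_0^∞ (u(x-y) + u(x+y)) K'(y) dy ≥ |J| u(x) − |J| + 2 K(M/2)`. -/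
theorem convolution_derivative_lower_bound
    (K : ℝ → ℝ) (J : ℝ) (u : ℝ → ℝ)
    (hodd : ∀ x, K (-x) = - K x)
    (hK_bdd : ∃ B, ∀ x, |K x| ≤ B)
    (hK_nonneg : ∀ x > (0:ℝ), 0 ≤ K x)
    (hK_anti : AntitoneOn K (Ioi 0))
    (hK_diff : ∀ x : ℝ, x ≠ 0 → DifferentiableAt ℝ K x)
    (hK_dcont : ContinuousOn (deriv K) {(0:ℝ)}ᶜ)
    (hK_conv : ConvexOn ℝ (Ioi 0) K)
    (hJ : Tendsto (fun x => 2 * K x) (nhdsWithin 0 (Iio 0)) (nhds J))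
    (hu_cont : Continuous u) (hu_int : Integrable u)
    (hu01 : ∀ y, 0 ≤ u y ∧ u y ≤ 1)
    (hM_pos : 0 < ∫ y, u y) :
    ∀ x : ℝ,
      HasDerivAt (fun z => ∫ y, K (z - y) * u y)
        (|J| * u x + ∫ y in Ioi (0:ℝ), (u (x - y) + u (x + y)) * deriv K y) x ∧
      |J| * u x - |J| + 2 * K ((∫ y, u y) / 2)
        ≤ |J| * u x + ∫ y in Ioi (0:ℝ), (u (x - y) + u (x + y)) * deriv K y := by
  obtain ⟨B, hB⟩ := hK_bdd
  set M : ℝ := ∫ y, u y with hMdef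
  set K0 : ℝ := -J/2 with hK0def
  set U : ℝ → ℝ := fun t => ∫ s in Iic t, u s with hUdef
  set F : ℝ → ℝ := fun z => ∫ y, K (z - y) * u y with hFdef
  set Gint : ℝ → ℝ := fun x => ∫ y in Ioi (0:ℝ), (u (x - y) + u (x + y)) * deriv K y
    with hGintdef
  -- ### basic jump facts
  have hJle : J ≤ 0 := by
    have hneg : ∀ x < (0:ℝ), K x ≤ 0 := by
      intro x hx
      have := hK_nonneg (-x) (by linarith)
      have h2 := hodd x
      nlinarith
    refine le_of_tendsto hJ ?_
    filter_upwards [self_mem_nhdsWithin] with x hx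
    have := hneg x hx
    linarith
  have hKt : Tendsto K (nhdsWithin 0 (Ioi 0)) (nhds K0) := by
    have hmap : Tendsto (fun x : ℝ => -x) (nhdsWithin 0 (Ioi 0)) (nhdsWithin 0 (Iio 0)) := by
      have hc : Tendsto (fun x : ℝ => -x) (nhds 0) (nhds (0:ℝ)) := by
        simpa using (continuous_neg.tendsto (0:ℝ))
      refine tendsto_nhdsWithin_of_tendsto_nhds_of_eventually_within _
        (hc.mono_left nhdsWithin_le_nhds) ?_
      filter_upwards [self_mem_nhdsWithin] with x hx
      simpa using hx
    have h1 : Tendsto (fun x => 2 * K (-x)) (nhdsWithin 0 (Ioi 0)) (nhds J) := hJ.comp hmap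
    have h2 : Tendsto (fun x => -(2 * K (-x)) / 2) (nhdsWithin 0 (Ioi 0)) (nhds (-J/2)) :=
      (h1.neg.div_const 2)
    refine h2.congr fun x => ?_
    rw [hodd]
    ring
  have habs : |J| = 2 * K0 := by
    rw [abs_of_nonpos hJle, hK0def]; ring
  -- ### derivative facts
  have hK'le : ∀ y > (0:ℝ), deriv K y ≤ 0 := by
    intro y hy
    have hd : HasDerivAt K (deriv K y) y := (hK_diff y (ne_of_gt hy)).hasDerivAt
    have hslope := (hasDerivAt_iff_tendsto_slope.mp hd).mono_left
      (nhdsWithin_mono y (by intro z hz; exact ne_of_gt hz : Ioi y ⊆ {y}ᶜ))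
    refine le_of_tendsto hslope ?_
    filter_upwards [self_mem_nhdsWithin] with z hz
    have hz' : y < z := hz
    have hKz : K z ≤ K y := hK_anti (mem_Ioi.2 hy) (mem_Ioi.2 (lt_trans hy hz')) hz'.le
    rw [slope_def_field]
    have hzy : 0 < z - y := by linarith
    exact div_nonpos_of_nonpos_of_nonneg (by linarith) hzy.le
  have hK'mono : MonotoneOn (deriv K) (Ioi (0:ℝ)) :=
    hK_conv.monotoneOn_deriv (fun x hx => hK_diff x (ne_of_gt hx))
  have hFTC : ∀ a b : ℝ, 0 < a → a ≤ b → ∫ y in a..b, deriv K y = K b - K a := by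
    intro a b ha hab
    have hsub : uIcc a b ⊆ {(0:ℝ)}ᶜ := by
      rw [uIcc_of_le hab]
      intro z hz
      exact ne_of_gt (lt_of_lt_of_le ha hz.1)
    refine intervalIntegral.integral_deriv_eq_sub (fun x hx => hK_diff x (hsub hx)) ?_
    exact (hK_dcont.mono hsub).intervalIntegrable
  -- ### integrability of `deriv K` on `(0,∞)`
  have hIntOn : ∀ a b : ℝ, 0 < a → IntegrableOn (deriv K) (Ioc a b) := by
    intro a b ha
    have hsub : Icc a b ⊆ {(0:ℝ)}ᶜ := fun z hz => ne_of_gt (lt_of_lt_of_le ha hz.1)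
    exact ((hK_dcont.mono hsub).integrableOn_Icc).mono_set Ioc_subset_Icc_self
  have hnorm : ∀ a b : ℝ, 0 < a → a ≤ b → ∫ y in Ioc a b, ‖deriv K y‖ = K a - K b := by
    intro a b ha hab
    have h1 : ∀ y ∈ Ioc a b, ‖deriv K y‖ = -(deriv K y) := by
      intro y hy
      rw [Real.norm_eq_abs, abs_of_nonpos (hK'le y (lt_of_lt_of_le ha hy.1.le))]
    rw [setIntegral_congr_fun measurableSet_Ioc h1, integral_neg,
      ← intervalIntegral.integral_of_le hab, hFTC a b ha hab]
    ring
  have hK'int : IntegrableOn (deriv K) (Ioi (0:ℝ)) := by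
    have h1 : IntegrableOn (deriv K) (Ioc (0:ℝ) 1) := by
      refine integrableOn_Ioc_of_intervalIntegral_norm_bounded_left
        (a := fun n : ℕ => 1/(n+1)) (l := atTop) (I := 2*B)
        (fun n => hIntOn _ _ (by positivity)) tendsto_one_div_add_atTop_nhds_zero_nat ?_
      filter_upwards with n
      have h0 : (0:ℝ) < 1/(n+1) := by positivity
      have h1' : 1/((n:ℝ)+1) ≤ 1 := by
        rw [div_le_one (by positivity)]; linarith [Nat.cast_nonneg (α := ℝ) n]
      rw [hnorm _ _ h0 h1']
      have := abs_le.1 (hB (1/((n:ℝ)+1)))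
      have := abs_le.1 (hB 1)
      linarith
    have h2 : IntegrableOn (deriv K) (Ioi (1:ℝ)) := by
      refine integrableOn_Ioi_of_intervalIntegral_norm_bounded (I := 2*B) (a := 1)
        (b := fun n : ℕ => (n:ℝ)) (l := atTop)
        (fun n => hIntOn _ _ one_pos) tendsto_natCast_atTop_atTop ?_
      filter_upwards [eventually_ge_atTop 1] with n hn
      have hn' : (1:ℝ) ≤ (n:ℝ) := by exact_mod_cast hn
      rw [intervalIntegral.integral_of_le hn', hnorm _ _ one_pos hn']
      have := abs_le.1 (hB ((n:ℝ)))
      have := abs_le.1 (hB 1)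
      linarith
    have hu : Ioi (0:ℝ) = Ioc 0 1 ∪ Ioi 1 := (Ioc_union_Ioi_eq_Ioi zero_le_one).symm
    rw [hu]
    exact h1.union h2
  -- ### the improper FTC identity on `Ioc 0 c`
  have hIoc : ∀ c : ℝ, 0 < c → ∫ y in Ioc (0:ℝ) c, deriv K y = K c - K0 := by
    intro c hc
    set s : ℕ → Set ℝ := fun n => Ioc (1/(n+1) : ℝ) c with hs
    have hsm : ∀ n, MeasurableSet (s n) := fun n => measurableSet_Ioc
    have hmono : Monotone s := by
      intro n m hnm
      apply Ioc_subset_Ioc_left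
      apply one_div_le_one_div_of_le (by positivity)
      have : (n:ℝ) ≤ m := by exact_mod_cast hnm
      linarith
    have hunion : (⋃ n, s n) = Ioc (0:ℝ) c := by
      ext y
      simp only [mem_iUnion, hs, mem_Ioc]
      constructor
      · rintro ⟨n, h1, h2⟩
        exact ⟨lt_trans (by positivity) h1, h2⟩
      · rintro ⟨h1, h2⟩
        obtain ⟨n, hn⟩ := exists_nat_one_div_lt h1
        exact ⟨n, hn, h2⟩
    have hfi : IntegrableOn (deriv K) (⋃ n, s n) := by
      rw [hunion]; exact hK'int.mono_set Ioc_subset_Ioi_self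
    have htend := tendsto_setIntegral_of_monotone hsm hmono hfi
    rw [hunion] at htend
    have heps : Tendsto (fun n : ℕ => (1/(n+1) : ℝ)) atTop (nhdsWithin 0 (Ioi 0)) := by
      refine tendsto_nhdsWithin_of_tendsto_nhds_of_eventually_within _
        tendsto_one_div_add_atTop_nhds_zero_nat ?_
      filter_upwards with n
      exact mem_Ioi.2 (by positivity)
    have hKlim : Tendsto (fun n : ℕ => K c - K (1/(n+1) : ℝ)) atTop (nhds (K c - K0)) :=
      tendsto_const_nhds.sub (hKt.comp heps)
    have heq : ∀ᶠ n : ℕ in atTop, ∫ y in s n, deriv K y = K c - K (1/(n+1):ℝ) := by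
      have hev : ∀ᶠ n : ℕ in atTop, (1/(n+1):ℝ) ≤ c := by
        have h2 : Ioc (0:ℝ) c ∈ nhdsWithin 0 (Ioi 0) := by
          refine mem_nhdsWithin.2 ⟨Iio c, isOpen_Iio, hc, ?_⟩
          rintro y ⟨hy1, hy2⟩
          exact ⟨hy2, le_of_lt hy1⟩
        filter_upwards [heps.eventually h2] with n hn
        exact hn.2
      filter_upwards [hev] with n hn
      rw [hs, ← intervalIntegral.integral_of_le hn, hFTC _ _ (by positivity) hn]
    refine tendsto_nhds_unique htend (hKlim.congr' ?_)
    filter_upwards [heq] with n h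
    exact h.symm
  -- ### the primitive `U` of `u`
  have hIic : ∀ t : ℝ, IntegrableOn u (Iic t) := fun t => hu_int.integrableOn
  have hrepr : ∀ t : ℝ, U t = U 0 + ∫ s in (0:ℝ)..t, u s := by
    intro t
    rw [← intervalIntegral.integral_Iic_sub_Iic (hIic 0) (hIic t)]
    ring
  have hU_deriv : ∀ t : ℝ, HasDerivAt U (u t) t := by
    intro t
    have h1 : HasDerivAt (fun z => U 0 + ∫ s in (0:ℝ)..z, u s) (u t) t := by
      refine HasDerivAt.const_add _ ?_
      refine intervalIntegral.integral_hasDerivAt_right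
        hu_int.intervalIntegrable ?_ hu_cont.continuousAt
      exact hu_cont.stronglyMeasurable.stronglyMeasurableAtFilter
    exact h1.congr_of_eventuallyEq (by filter_upwards with z; exact hrepr z)
  have hU_cont : Continuous U := by
    rw [continuous_iff_continuousAt]; exact fun t => (hU_deriv t).continuousAt
  have hU_bdd : ∀ t, 0 ≤ U t ∧ U t ≤ M := by
    intro t
    constructor
    · exact setIntegral_nonneg measurableSet_Iic (fun y _ => (hu01 y).1)
    · refine setIntegral_le_integral hu_int ?_
      filter_upwards with y; exact (hu01 y).1
  have hU_top : Tendsto U atTop (nhds M) :=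
    (MeasureTheory.aecover_Iic (tendsto_id (α := ℝ))
      (μ := (volume : Measure ℝ)) (l := atTop)).integral_tendsto_of_countably_generated hu_int
  have hU_bot : Tendsto U atBot (nhds 0) := by
    have hsplit : ∀ t : ℝ, U t = M - ∫ y in Ioi t, u y := by
      intro t
      have := intervalIntegral.integral_Iic_add_Ioi (b := t)
        (hu_int.integrableOn) (hu_int.integrableOn)
      rw [hUdef]; rw [hMdef]; linarith [this]
    have h2 : Tendsto (fun t : ℝ => ∫ y in Ioi t, u y) atBot (nhds M) :=
      (MeasureTheory.aecover_Ioi (tendsto_id (α := ℝ))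
        (μ := (volume : Measure ℝ)) (l := atBot)).integral_tendsto_of_countably_generated hu_int
    have h3 : Tendsto (fun t : ℝ => M - ∫ y in Ioi t, u y) atBot (nhds 0) := by
      have := (tendsto_const_nhds (x := M) (f := atBot (α := ℝ))).sub h2
      simpa using this
    exact h3.congr (fun t => (hsplit t).symm)
  -- ### measurability of K
  have hKaem : AEMeasurable K (volume : Measure ℝ) := by
    have hcont : ContinuousOn K {(0:ℝ)}ᶜ := fun z hz =>
      (hK_diff z hz).continuousAt.continuousWithinAt
    have h1 : AEMeasurable K ((volume : Measure ℝ).restrict {(0:ℝ)}ᶜ) :=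
      hcont.aemeasurable (measurableSet_singleton 0).compl
    have h2 : (volume : Measure ℝ).restrict {(0:ℝ)}ᶜ = volume := by
      rw [Measure.restrict_congr_set (t := univ) (ae_eq_univ.2 (by simp)),
        Measure.restrict_univ]
    rwa [h2] at h1
  -- ### translation facts
  have htransA : ∀ x : ℝ, Integrable (fun y => u (x - y)) volume ∧
      Integrable (fun y => u (x + y)) volume ∧
      (∫ y in Ioi (0:ℝ), u (x - y)) = U x ∧
      (∫ y in Ioi (0:ℝ), u (x + y)) = (∫ s in Ioi x, u s) := by
    intro x
    have hmp1 : MeasurePreserving (fun y : ℝ => x + y) volume volume :=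
      measurePreserving_add_left volume x
    have hmp2 : MeasurePreserving (fun y : ℝ => x - y) volume volume := by
      have := hmp1.comp (Measure.measurePreserving_neg (volume : Measure ℝ))
      simpa [Function.comp_def, sub_eq_add_neg] using this
    have hi1 : Integrable (fun y => u (x + y)) volume :=
      (hmp1.integrable_comp hu_cont.aestronglyMeasurable).2 hu_int
    have hi2 : Integrable (fun y => u (x - y)) volume :=
      (hmp2.integrable_comp hu_cont.aestronglyMeasurable).2 hu_int
    refine ⟨hi2, hi1, ?_, ?_⟩
    · have emb : MeasurableEmbedding (fun y : ℝ => x + y) :=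
        (Homeomorph.addLeft x).isClosedEmbedding.measurableEmbedding
      have h1 : ∫ y in Iic x, u y = ∫ t in (fun y : ℝ => x + y) ⁻¹' (Iic x), u (x + t) := by
        rw [← MeasurableEmbedding.setIntegral_map emb u (Iic x), hmp1.map_eq]
      have hpre : (fun y : ℝ => x + y) ⁻¹' (Iic x) = Iic 0 := by
        ext t; simp [Set.mem_preimage]
      show (∫ y in Ioi (0:ℝ), u (x - y)) = ∫ s in Iic x, u s
      rw [h1, hpre]
      rw [show (Iic (0:ℝ)) = Iic (-(0:ℝ)) by norm_num, ← integral_comp_neg_Ioi]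
      refine setIntegral_congr_fun measurableSet_Ioi (fun y _ => ?_)
      rw [← sub_eq_add_neg]
    · have emb : MeasurableEmbedding (fun y : ℝ => x + y) :=
        (Homeomorph.addLeft x).isClosedEmbedding.measurableEmbedding
      have h1 : ∫ y in Ioi x, u y = ∫ t in (fun y : ℝ => x + y) ⁻¹' (Ioi x), u (x + t) := by
        rw [← MeasurableEmbedding.setIntegral_map emb u (Ioi x), hmp1.map_eq]
      have hpre : (fun y : ℝ => x + y) ⁻¹' (Ioi x) = Ioi 0 := by
        ext t; simp [Set.mem_preimage]
      rw [h1, hpre]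
  have hKu_int : ∀ x : ℝ, Integrable (fun y => K y * u (x - y)) volume ∧
      Integrable (fun y => K y * u (x + y)) volume := by
    intro x
    have hbound : ∀ (v : ℝ → ℝ), (∀ y, 0 ≤ v y) → Integrable v →
        AEStronglyMeasurable (fun y => K y * v y) (volume : Measure ℝ) →
        Integrable (fun y => K y * v y) volume := by
      intro v hv hvint hmeas
      refine Integrable.mono' (hvint.const_mul B) hmeas ?_
      filter_upwards with y
      rw [norm_mul, Real.norm_eq_abs, Real.norm_eq_abs, abs_of_nonneg (hv y)]
      exact mul_le_mul_of_nonneg_right (hB y) (hv y)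
    constructor
    · exact hbound _ (fun y => (hu01 _).1) (htransA x).1
        (hKaem.mul (hu_cont.comp (continuous_const.sub continuous_id)).measurable.aemeasurable).aestronglyMeasurable
    · exact hbound _ (fun y => (hu01 _).1) (htransA x).2.1
        (hKaem.mul (hu_cont.comp (continuous_const.add continuous_id)).measurable.aemeasurable).aestronglyMeasurable
  -- ### representation of the convolution
  have hFrepr : ∀ x : ℝ, F x = ∫ y in Ioi (0:ℝ), K y * (u (x - y) - u (x + y)) := by
    intro x
    have hmp1 : MeasurePreserving (fun y : ℝ => x + y) volume volume :=
      measurePreserving_add_left volume x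
    have hmp2 : MeasurePreserving (fun y : ℝ => x - y) volume volume := by
      have := hmp1.comp (Measure.measurePreserving_neg (volume : Measure ℝ))
      simpa [Function.comp_def, sub_eq_add_neg] using this
    have hemb : MeasurableEmbedding (fun y : ℝ => x - y) := by
      have heq : (fun y : ℝ => x - y) = fun y : ℝ => x + (-y) := by ext y; ring
      rw [heq]
      exact ((Homeomorph.neg ℝ).trans (Homeomorph.addLeft x)).isClosedEmbedding.measurableEmbedding
    have hint2 := (hKu_int x).1
    have hint1 := (hKu_int x).2
    have step1 : F x = ∫ y, K y * u (x - y) := by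
      have h := hmp2.integral_comp hemb (fun y => K y * u (x - y))
      show (∫ y, K (x - y) * u y) = ∫ y, K y * u (x - y)
      rw [← h]
      congr 1; ext y
      congr 2
      ring_nf
    rw [step1]
    have step2 : (∫ y, K y * u (x - y)) =
        (∫ y in Iic (0:ℝ), K y * u (x - y)) + ∫ y in Ioi (0:ℝ), K y * u (x - y) :=
      (intervalIntegral.integral_Iic_add_Ioi hint2.integrableOn hint2.integrableOn).symm
    have step3 : (∫ y in Iic (0:ℝ), K y * u (x - y)) = - ∫ y in Ioi (0:ℝ), K y * u (x + y) := by
      have h1 : (∫ t in Ioi (0:ℝ), K (-t) * u (x - -t)) = ∫ y in Iic (-(0:ℝ)), K y * u (x - y) :=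
        integral_comp_neg_Ioi 0 (fun y => K y * u (x - y))
      rw [neg_zero] at h1
      rw [← h1, ← integral_neg]
      refine setIntegral_congr_fun measurableSet_Ioi (fun t _ => ?_)
      rw [hodd]
      ring_nf
    rw [step2, step3]
    have hsplit : (∫ y in Ioi (0:ℝ), K y * (u (x - y) - u (x + y))) =
        (∫ y in Ioi (0:ℝ), K y * u (x - y)) - ∫ y in Ioi (0:ℝ), K y * u (x + y) := by
      simp_rw [mul_sub]
      exact integral_sub hint2.integrableOn hint1.integrableOn
    rw [hsplit]
    ring
  -- ### Fubini
  have hFub : ∀ a b : ℝ, a ≤ b →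
      (∫ x in Ioc a b, ∫ y in Ioi (0:ℝ), (u (x - y) + u (x + y)) * deriv K y)
        = ∫ y in Ioi (0:ℝ), ((U (b-y) - U (a-y)) + (U (b+y) - U (a+y))) * deriv K y := by
    intro a b hab
    set μ := (volume : Measure ℝ).restrict (Ioc a b)
    set ν := (volume : Measure ℝ).restrict (Ioi (0:ℝ))
    have hw_cont : Continuous (fun p : ℝ × ℝ => u (p.1 - p.2) + u (p.1 + p.2)) :=
      (hu_cont.comp (continuous_fst.sub continuous_snd)).add
        (hu_cont.comp (continuous_fst.add continuous_snd))
    have hmeas : AEStronglyMeasurable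
        (fun p : ℝ × ℝ => (u (p.1 - p.2) + u (p.1 + p.2)) * deriv K p.2) (μ.prod ν) :=
      (hw_cont.measurable.mul ((measurable_deriv K).comp measurable_snd)).aestronglyMeasurable
    have hwle : ∀ p : ℝ × ℝ, ‖u (p.1 - p.2) + u (p.1 + p.2)‖ ≤ 2 := by
      intro p
      rw [Real.norm_eq_abs, abs_of_nonneg (by linarith [(hu01 (p.1-p.2)).1, (hu01 (p.1+p.2)).1])]
      linarith [(hu01 (p.1-p.2)).2, (hu01 (p.1+p.2)).2]
    have hK'normint : Integrable (fun y => ‖deriv K y‖) ν := hK'int.norm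
    have hint : Integrable
        (fun p : ℝ × ℝ => (u (p.1 - p.2) + u (p.1 + p.2)) * deriv K p.2) (μ.prod ν) := by
      rw [integrable_prod_iff hmeas]
      constructor
      · filter_upwards with x
        refine Integrable.mono' (hK'normint.const_mul 2) ?_ ?_
        · exact ((hw_cont.comp (Continuous.prodMk_right x)).measurable.mul
            (measurable_deriv K)).aestronglyMeasurable
        · filter_upwards with y
          rw [norm_mul]
          exact mul_le_mul_of_nonneg_right (hwle (x,y)) (norm_nonneg _)
      · refine Integrable.mono' (integrable_const (2 * ∫ y, ‖deriv K y‖ ∂ν)) ?_ ?_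
        · exact hmeas.norm.integral_prod_right'
        · filter_upwards with x
          rw [Real.norm_eq_abs, abs_of_nonneg (integral_nonneg (fun y => norm_nonneg _))]
          calc (∫ y, ‖(u (x - y) + u (x + y)) * deriv K y‖ ∂ν)
              ≤ ∫ y, 2 * ‖deriv K y‖ ∂ν := by
                refine integral_mono_of_nonneg (by filter_upwards with y; positivity)
                  (hK'normint.const_mul 2) ?_
                filter_upwards with y
                rw [norm_mul]
                exact mul_le_mul_of_nonneg_right (hwle (x,y)) (norm_nonneg _)
            _ = 2 * ∫ y, ‖deriv K y‖ ∂ν := integral_const_mul 2 _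
    have hswap := MeasureTheory.integral_integral_swap (μ := μ) (ν := ν)
        (f := fun x y => (u (x - y) + u (x + y)) * deriv K y) (by exact hint)
    rw [hswap]
    refine setIntegral_congr_fun measurableSet_Ioi (fun y _ => ?_)
    rw [integral_mul_const]
    congr 1
    have h1 : IntervalIntegrable (fun x => u (x - y)) volume a b :=
      (hu_cont.comp (continuous_id.sub continuous_const)).intervalIntegrable _ _
    have h2 : IntervalIntegrable (fun x => u (x + y)) volume a b :=
      (hu_cont.comp (continuous_id.add continuous_const)).intervalIntegrable _ _
    rw [← intervalIntegral.integral_of_le hab, intervalIntegral.integral_add h1 h2]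
    congr 1
    · rw [intervalIntegral.integral_comp_sub_right (fun s => u s) y,
        ← intervalIntegral.integral_Iic_sub_Iic hu_int.integrableOn hu_int.integrableOn]
    · rw [intervalIntegral.integral_comp_add_right (fun s => u s) y,
        ← intervalIntegral.integral_Iic_sub_Iic hu_int.integrableOn hu_int.integrableOn]
  -- ### integration by parts on `(0,∞)`
  have hIBP : ∀ (H H' : ℝ → ℝ) (CH : ℝ),
      (∀ y, HasDerivAt H (H' y) y) → Continuous H' → (∀ y, |H y| ≤ CH) →
      Tendsto H atTop (nhds 0) → IntegrableOn H' (Ioi (0:ℝ)) →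
      (∫ y in Ioi (0:ℝ), deriv K y * H y)
        = -(K0 * H 0) - ∫ y in Ioi (0:ℝ), K y * H' y := by
    intro H H' CH hH hH'_cont hCH hHtop hH'int
    have hH_cont : Continuous H := by
      rw [continuous_iff_continuousAt]; exact fun y => (hH y).continuousAt
    have hKH_int : IntegrableOn (fun y => deriv K y * H y) (Ioi (0:ℝ)) := by
      refine Integrable.mono' (hK'int.norm.mul_const CH) ?_ ?_
      · exact ((measurable_deriv K).aemeasurable.aestronglyMeasurable.mul
          hH_cont.aestronglyMeasurable).restrict
      · filter_upwards with y
        rw [norm_mul]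
        exact mul_le_mul_of_nonneg_left (by rw [Real.norm_eq_abs]; exact hCH y) (norm_nonneg _)
    have hKH'_int : IntegrableOn (fun y => K y * H' y) (Ioi (0:ℝ)) := by
      refine Integrable.mono' (hH'int.norm.const_mul B) ?_ ?_
      · exact ((hKaem.restrict).aestronglyMeasurable.mul
          hH'_cont.aestronglyMeasurable.restrict)
      · filter_upwards with y
        rw [norm_mul]
        exact mul_le_mul_of_nonneg_right (by rw [Real.norm_eq_abs]; exact hB y) (norm_nonneg _)
    have hsum_int : IntegrableOn (fun y => deriv K y * H y + K y * H' y) (Ioi (0:ℝ)) :=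
      hKH_int.add hKH'_int
    have hstep : ∀ ε : ℝ, 0 < ε →
        (∫ y in Ioi ε, (deriv K y * H y + K y * H' y)) = -(K ε * H ε) := by
      intro ε hε
      have h := integral_Ioi_of_hasDerivAt_of_tendsto (f := fun y => K y * H y)
        (f' := fun y => deriv K y * H y + K y * H' y) (a := ε) (m := 0)
        (((hK_diff ε hε.ne').continuousAt.mul hH_cont.continuousAt).continuousWithinAt)
        (fun y hy => ((hK_diff y (lt_trans hε hy).ne').hasDerivAt.mul (hH y)))
        (hsum_int.mono_set (Ioi_subset_Ioi hε.le)) ?_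
      · rw [h]; ring
      · refine squeeze_zero_norm (fun y => ?_) (by simpa using (hHtop.norm.const_mul B))
        rw [norm_mul]
        exact mul_le_mul_of_nonneg_right (by rw [Real.norm_eq_abs]; exact hB y) (norm_nonneg _)
    have heps0 : Tendsto (fun n : ℕ => (1/(n+1) : ℝ)) atTop (nhds 0) :=
      tendsto_one_div_add_atTop_nhds_zero_nat
    have heps : Tendsto (fun n : ℕ => (1/(n+1) : ℝ)) atTop (nhdsWithin 0 (Ioi 0)) := by
      refine tendsto_nhdsWithin_of_tendsto_nhds_of_eventually_within _ heps0 ?_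
      filter_upwards with n; exact mem_Ioi.2 (by positivity)
    have hmono : Monotone (fun n : ℕ => Ioi ((1/(n+1)) : ℝ)) := by
      intro n m hnm
      apply Ioi_subset_Ioi
      apply one_div_le_one_div_of_le (by positivity)
      have : (n:ℝ) ≤ m := by exact_mod_cast hnm
      linarith
    have hunion : (⋃ n : ℕ, Ioi ((1/(n+1)) : ℝ)) = Ioi (0:ℝ) := by
      ext y
      simp only [mem_iUnion, mem_Ioi]
      constructor
      · rintro ⟨n, hn⟩; exact lt_trans (by positivity) hn
      · intro hy; obtain ⟨n, hn⟩ := exists_nat_one_div_lt hy; exact ⟨n, hn⟩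
    have hlim1 : Tendsto (fun n : ℕ => ∫ y in Ioi ((1/(n+1)) : ℝ),
        (deriv K y * H y + K y * H' y)) atTop
        (nhds (∫ y in Ioi (0:ℝ), (deriv K y * H y + K y * H' y))) := by
      have := tendsto_setIntegral_of_monotone (fun n : ℕ => measurableSet_Ioi) hmono
        (by rw [hunion]; exact hsum_int)
      rwa [hunion] at this
    have hlim2 : Tendsto (fun n : ℕ => -(K ((1/(n+1)) : ℝ) * H ((1/(n+1)) : ℝ))) atTop
        (nhds (-(K0 * H 0))) :=
      ((hKt.comp heps).mul ((hH_cont.tendsto 0).comp heps0)).neg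
    have key : (∫ y in Ioi (0:ℝ), (deriv K y * H y + K y * H' y)) = -(K0 * H 0) := by
      refine tendsto_nhds_unique hlim1 (hlim2.congr fun n => ?_)
      rw [hstep _ (by positivity)]
    have hadd := integral_add hKH_int hKH'_int
    rw [← key, hadd]
    ring
  -- ### continuity of the integral term
  have hGint_cont : Continuous Gint := by
    refine MeasureTheory.continuous_of_dominated (bound := fun y => 2 * ‖deriv K y‖)
      ?_ ?_ (hK'int.norm.const_mul 2) ?_
    · intro x
      exact (((hu_cont.comp (continuous_const.sub continuous_id)).add
        (hu_cont.comp (continuous_const.add continuous_id))).measurable.mul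
        (measurable_deriv K)).aestronglyMeasurable.restrict
    · intro x
      filter_upwards with y
      rw [norm_mul]
      have h1 : ‖u (x - y) + u (x + y)‖ ≤ 2 := by
        rw [Real.norm_eq_abs, abs_of_nonneg (by linarith [(hu01 (x-y)).1, (hu01 (x+y)).1])]
        linarith [(hu01 (x-y)).2, (hu01 (x+y)).2]
      exact mul_le_mul_of_nonneg_right h1 (norm_nonneg _)
    · filter_upwards with y
      exact (((hu_cont.comp (continuous_id.sub continuous_const)).add
        (hu_cont.comp (continuous_id.add continuous_const))).mul continuous_const)
  set G : ℝ → ℝ := fun x => |J| * u x + Gint x with hGdef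
  have hG_cont : Continuous G := (continuous_const.mul hu_cont).add hGint_cont
  -- ### key identity on intervals
  have hKey : ∀ a b : ℝ, a ≤ b → (∫ t in a..b, G t) = F b - F a := by
    intro a b hab
    set H : ℝ → ℝ := fun y => (U (b-y) - U (a-y)) + (U (b+y) - U (a+y)) with hHdef
    set H' : ℝ → ℝ := fun y => (u (b-y) * (-1) - u (a-y) * (-1)) + (u (b+y) * 1 - u (a+y) * 1)
      with hH'def
    have hHd : ∀ y, HasDerivAt H (H' y) y := by
      intro y
      have hb1 : HasDerivAt (fun y : ℝ => b - y) (-1) y := by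
        simpa using (hasDerivAt_id y).const_sub b
      have ha1 : HasDerivAt (fun y : ℝ => a - y) (-1) y := by
        simpa using (hasDerivAt_id y).const_sub a
      have hb2 : HasDerivAt (fun y : ℝ => b + y) 1 y := by
        simpa using (hasDerivAt_id y).const_add b
      have ha2 : HasDerivAt (fun y : ℝ => a + y) 1 y := by
        simpa using (hasDerivAt_id y).const_add a
      have h1 : HasDerivAt (fun y => U (b - y)) (u (b - y) * (-1)) y :=
        (hU_deriv (b - y)).comp y hb1
      have h2 : HasDerivAt (fun y => U (a - y)) (u (a - y) * (-1)) y :=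
        (hU_deriv (a - y)).comp y ha1
      have h3 : HasDerivAt (fun y => U (b + y)) (u (b + y) * 1) y :=
        (hU_deriv (b + y)).comp y hb2
      have h4 : HasDerivAt (fun y => U (a + y)) (u (a + y) * 1) y :=
        (hU_deriv (a + y)).comp y ha2
      exact ((h1.sub h2).add (h3.sub h4))
    have hH'_cont : Continuous H' := by
      have c1 : Continuous (fun y : ℝ => b - y) := continuous_const.sub continuous_id
      have c2 : Continuous (fun y : ℝ => a - y) := continuous_const.sub continuous_id
      have c3 : Continuous (fun y : ℝ => b + y) := continuous_const.add continuous_id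
      have c4 : Continuous (fun y : ℝ => a + y) := continuous_const.add continuous_id
      exact (((hu_cont.comp c1).mul continuous_const).sub
          ((hu_cont.comp c2).mul continuous_const)).add
        (((hu_cont.comp c3).mul continuous_const).sub
          ((hu_cont.comp c4).mul continuous_const))
    have hCH : ∀ y, |H y| ≤ 2 * M := by
      intro y
      have b1 := hU_bdd (b - y); have b2 := hU_bdd (a - y)
      have b3 := hU_bdd (b + y); have b4 := hU_bdd (a + y)
      have hy : H y = (U (b-y) - U (a-y)) + (U (b+y) - U (a+y)) := rfl
      rw [hy, abs_le]
      constructor <;> linarith [b1.1, b1.2, b2.1, b2.2, b3.1, b3.2, b4.1, b4.2]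
    have hHtop : Tendsto H atTop (nhds 0) := by
      have tneg : Tendsto (fun y : ℝ => -y) atTop atBot := tendsto_neg_atTop_atBot
      have t1 : Tendsto (fun y : ℝ => b - y) atTop atBot := by
        have := tendsto_atBot_add_const_left atTop b tneg
        refine this.congr fun y => ?_
        ring
      have t2 : Tendsto (fun y : ℝ => a - y) atTop atBot := by
        have := tendsto_atBot_add_const_left atTop a tneg
        refine this.congr fun y => ?_
        ring
      have t3 : Tendsto (fun y : ℝ => b + y) atTop atTop :=
        tendsto_atTop_add_const_left atTop b tendsto_id
      have t4 : Tendsto (fun y : ℝ => a + y) atTop atTop :=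
        tendsto_atTop_add_const_left atTop a tendsto_id
      have h1 := hU_bot.comp t1
      have h2 := hU_bot.comp t2
      have h3 := hU_top.comp t3
      have h4 := hU_top.comp t4
      have htot := (h1.sub h2).add (h3.sub h4)
      simpa using htot
    have hH'int : IntegrableOn H' (Ioi (0:ℝ)) := by
      refine Integrable.integrableOn ?_
      exact ((((htransA b).1.mul_const _).sub ((htransA a).1.mul_const _)).add
        (((htransA b).2.1.mul_const _).sub ((htransA a).2.1.mul_const _)))
    have hIBPab := hIBP H H' (2*M) hHd hH'_cont hCH hHtop hH'int
    have hsa : IntegrableOn (fun y => K y * (u (a - y) - u (a + y))) (Ioi (0:ℝ)) := by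
      have h := ((hKu_int a).1.sub (hKu_int a).2).integrableOn (s := Ioi (0:ℝ))
      exact h.congr_fun (fun y _ => by simp only [Pi.sub_apply]; ring) measurableSet_Ioi
    have hsb : IntegrableOn (fun y => K y * (u (b - y) - u (b + y))) (Ioi (0:ℝ)) := by
      have h := ((hKu_int b).1.sub (hKu_int b).2).integrableOn (s := Ioi (0:ℝ))
      exact h.congr_fun (fun y _ => by simp only [Pi.sub_apply]; ring) measurableSet_Ioi
    have hKH' : (∫ y in Ioi (0:ℝ), K y * H' y) = F a - F b := by
      have hpt : ∀ y ∈ Ioi (0:ℝ), K y * H' y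
          = K y * (u (a - y) - u (a + y)) - K y * (u (b - y) - u (b + y)) := by
        intro y _
        show K y * ((u (b-y) * (-1) - u (a-y) * (-1)) + (u (b+y) * 1 - u (a+y) * 1)) = _
        ring
      rw [setIntegral_congr_fun measurableSet_Ioi hpt, integral_sub hsa hsb,
        ← hFrepr a, ← hFrepr b]
    have hH0 : H 0 = 2 * (U b - U a) := by
      have h0 : H 0 = (U (b-0) - U (a-0)) + (U (b+0) - U (a+0)) := rfl
      rw [h0, sub_zero, sub_zero, add_zero, add_zero]
      ring
    have hf1 : (∫ t in a..b, G t) = (∫ t in a..b, |J| * u t) + ∫ t in a..b, Gint t := by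
      have h := intervalIntegral.integral_add (μ := volume) (a := a) (b := b)
        (f := fun t => |J| * u t) (g := Gint)
        ((continuous_const.mul hu_cont).intervalIntegrable a b)
        (hGint_cont.intervalIntegrable a b)
      exact h
    have hf2 : (∫ t in a..b, |J| * u t) = |J| * (U b - U a) := by
      rw [intervalIntegral.integral_const_mul]
      congr 1
      exact (intervalIntegral.integral_Iic_sub_Iic (hIic a) (hIic b)).symm
    have hf3 : (∫ t in a..b, Gint t) = ∫ y in Ioi (0:ℝ), H y * deriv K y := by
      rw [intervalIntegral.integral_of_le hab]
      exact hFub a b hab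
    have hf4 : (∫ y in Ioi (0:ℝ), H y * deriv K y) = ∫ y in Ioi (0:ℝ), deriv K y * H y :=
      setIntegral_congr_fun measurableSet_Ioi (fun y _ => mul_comm _ _)
    rw [hf1, hf2, hf3, hf4, hIBPab, hKH', hH0, habs]
    ring
  have hKey' : ∀ p q : ℝ, (∫ t in p..q, G t) = F q - F p := by
    intro p q
    rcases le_total p q with h | h
    · exact hKey p q h
    · rw [intervalIntegral.integral_symm, hKey q p h]; ring
  intro x
  constructor
  · have hder : HasDerivAt (fun z => F x + ∫ t in x..z, G t) (G x) x := by
      refine HasDerivAt.const_add _ ?_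
      refine intervalIntegral.integral_hasDerivAt_right
        (hG_cont.intervalIntegrable x x) ?_ hG_cont.continuousAt
      exact hG_cont.stronglyMeasurable.stronglyMeasurableAtFilter
    have heq : ∀ z, F z = F x + ∫ t in x..z, G t := by
      intro z; rw [hKey' x z]; ring
    have hfinal : HasDerivAt F (G x) x :=
      hder.congr_of_eventuallyEq (by filter_upwards with z; exact heq z)
    exact hfinal
  · -- the lower bound
    have hw0 : ∀ y : ℝ, 0 ≤ u (x - y) + u (x + y) := fun y => by
      linarith [(hu01 (x-y)).1, (hu01 (x+y)).1]
    have hw2 : ∀ y : ℝ, u (x - y) + u (x + y) ≤ 2 := fun y => by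
      linarith [(hu01 (x-y)).2, (hu01 (x+y)).2]
    have hw_cont : Continuous (fun y : ℝ => u (x - y) + u (x + y)) :=
      (hu_cont.comp (continuous_const.sub continuous_id)).add
        (hu_cont.comp (continuous_const.add continuous_id))
    have hw_int : IntegrableOn (fun y : ℝ => u (x - y) + u (x + y)) (Ioi (0:ℝ)) :=
      ((htransA x).1.add (htransA x).2.1).integrableOn
    have hw_total : (∫ y in Ioi (0:ℝ), (u (x - y) + u (x + y))) = M := by
      rw [integral_add ((htransA x).1.integrableOn) ((htransA x).2.1.integrableOn),
        (htransA x).2.2.1, (htransA x).2.2.2]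
      exact intervalIntegral.integral_Iic_add_Ioi hu_int.integrableOn hu_int.integrableOn
    have hext : -(2*K0) + 2 * K (M/2) ≤
        ∫ y in Ioi (0:ℝ), (u (x - y) + u (x + y)) * deriv K y := by
      set c : ℝ := M/2 with hc
      have hc0 : 0 < c := by positivity
      have hwK'_int : IntegrableOn (fun y => (u (x - y) + u (x + y)) * deriv K y)
          (Ioi (0:ℝ)) := by
        refine Integrable.mono' (hK'int.norm.const_mul 2) ?_ ?_
        · exact (hw_cont.measurable.aemeasurable.aestronglyMeasurable.mul
            (measurable_deriv K).aemeasurable.aestronglyMeasurable).restrict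
        · filter_upwards with y
          rw [norm_mul]
          refine mul_le_mul_of_nonneg_right ?_ (norm_nonneg _)
          rw [Real.norm_eq_abs, abs_of_nonneg (hw0 y)]
          exact hw2 y
      have hdisj : Disjoint (Ioc (0:ℝ) c) (Ioi c) := Ioc_disjoint_Ioi le_rfl
      have hun : Ioc (0:ℝ) c ∪ Ioi c = Ioi 0 := Ioc_union_Ioi_eq_Ioi hc0.le
      have hsplit : ∀ f : ℝ → ℝ, IntegrableOn f (Ioi (0:ℝ)) →
          (∫ y in Ioi (0:ℝ), f y) = (∫ y in Ioc (0:ℝ) c, f y) + ∫ y in Ioi c, f y := by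
        intro f hf
        rw [← hun]
        exact setIntegral_union hdisj measurableSet_Ioi
          (hf.mono_set (hun ▸ subset_union_left)) (hf.mono_set (hun ▸ subset_union_right))
      have hw_int1 : IntegrableOn (fun y : ℝ => u (x - y) + u (x + y)) (Ioc (0:ℝ) c) :=
        hw_int.mono_set (hun ▸ subset_union_left)
      have hw_int2 : IntegrableOn (fun y : ℝ => u (x - y) + u (x + y)) (Ioi c) :=
        hw_int.mono_set (hun ▸ subset_union_right)
      have hK'int1 : IntegrableOn (deriv K) (Ioc (0:ℝ) c) :=
        hK'int.mono_set (hun ▸ subset_union_left)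
      have hwK'1 : IntegrableOn (fun y => (u (x - y) + u (x + y)) * deriv K y)
          (Ioc (0:ℝ) c) := hwK'_int.mono_set (hun ▸ subset_union_left)
      have hwK'2 : IntegrableOn (fun y => (u (x - y) + u (x + y)) * deriv K y) (Ioi c) :=
        hwK'_int.mono_set (hun ▸ subset_union_right)
      have hconst2 : IntegrableOn (fun _ : ℝ => (2:ℝ)) (Ioc (0:ℝ) c) :=
        integrableOn_const measure_Ioc_lt_top.ne
      have hint2' : IntegrableOn
          (fun y => ((u (x - y) + u (x + y)) - 2) * deriv K c) (Ioc (0:ℝ) c) := by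
        exact (hw_int1.sub hconst2).mul_const _
      have hlow1 : (∫ y in Ioc (0:ℝ) c, (2 * deriv K y + ((u (x - y) + u (x + y)) - 2) * deriv K c))
          ≤ ∫ y in Ioc (0:ℝ) c, (u (x - y) + u (x + y)) * deriv K y := by
        refine setIntegral_mono_on ((hK'int1.const_mul 2).add hint2') hwK'1 measurableSet_Ioc ?_
        intro y hy
        have h1 : deriv K y ≤ deriv K c := hK'mono (mem_Ioi.2 hy.1) (mem_Ioi.2 hc0) hy.2
        have h2 : ((u (x - y) + u (x + y)) - 2) * deriv K c
            ≤ ((u (x - y) + u (x + y)) - 2) * deriv K y :=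
          mul_le_mul_of_nonpos_left h1 (by linarith [hw2 y])
        have expand : (u (x - y) + u (x + y)) * deriv K y
            = 2 * deriv K y + ((u (x - y) + u (x + y)) - 2) * deriv K y := by ring
        linarith [h2, expand]
      have hlow2 : (∫ y in Ioi c, (u (x - y) + u (x + y)) * deriv K c)
          ≤ ∫ y in Ioi c, (u (x - y) + u (x + y)) * deriv K y := by
        refine setIntegral_mono_on (hw_int2.mul_const _) hwK'2 measurableSet_Ioi ?_
        intro y hy
        have h1 : deriv K c ≤ deriv K y :=
          hK'mono (mem_Ioi.2 hc0) (mem_Ioi.2 (lt_trans hc0 hy)) (le_of_lt hy)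
        exact mul_le_mul_of_nonneg_left h1 (hw0 y)
      have hIoc_c := hIoc c hc0
      have hvol : (volume (Ioc (0:ℝ) c)).toReal = c := by
        rw [Real.volume_Ioc]
        simp [hc0.le]
      have hcomp1 : (∫ y in Ioc (0:ℝ) c,
            (2 * deriv K y + ((u (x - y) + u (x + y)) - 2) * deriv K c))
          = 2 * (K c - K0)
            + ((∫ y in Ioc (0:ℝ) c, (u (x - y) + u (x + y))) - 2*c) * deriv K c := by
        rw [integral_add (hK'int1.const_mul 2) hint2']
        rw [integral_const_mul, hIoc_c, integral_mul_const]
        rw [integral_sub hw_int1 hconst2]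
        rw [setIntegral_const, measureReal_def, hvol, smul_eq_mul]
        ring
      have hcomp2 : (∫ y in Ioi c, (u (x - y) + u (x + y)) * deriv K c)
          = (∫ y in Ioi c, (u (x - y) + u (x + y))) * deriv K c :=
        integral_mul_const _ _
      have htot : (∫ y in Ioc (0:ℝ) c, (u (x - y) + u (x + y)))
          + (∫ y in Ioi c, (u (x - y) + u (x + y))) = M := by
        rw [← hsplit _ hw_int, hw_total]
      have hfinal := add_le_add hlow1 hlow2
      rw [← hsplit _ hwK'_int] at hfinal
      rw [hcomp1, hcomp2] at hfinal
      have h2c : 2 * c = M := by rw [hc]; ring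
      have hzsum : ((∫ y in Ioc (0:ℝ) c, (u (x - y) + u (x + y))) - 2*c)
          + (∫ y in Ioi c, (u (x - y) + u (x + y))) = 0 := by linarith
      have hzero : ((∫ y in Ioc (0:ℝ) c, (u (x - y) + u (x + y))) - 2*c) * deriv K c
          + (∫ y in Ioi c, (u (x - y) + u (x + y))) * deriv K c = 0 := by
        calc ((∫ y in Ioc (0:ℝ) c, (u (x - y) + u (x + y))) - 2*c) * deriv K c
              + (∫ y in Ioi c, (u (x - y) + u (x + y))) * deriv K c
            = (((∫ y in Ioc (0:ℝ) c, (u (x - y) + u (x + y))) - 2*c)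
              + (∫ y in Ioi c, (u (x - y) + u (x + y)))) * deriv K c := by ring
          _ = 0 := by rw [hzsum]; ring
      linarith [hfinal, hzero]
    linarith [hext, habs]
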